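/- arXiv:2510.02636 — 2 statements merged into one kernel-verified Lean document; each statement's English description precedes it below -/
import Mathlib

section
/- If v̄ : ℝ → ℝ is differentiable, 0 ≤ v̄(t) < 1, and v̄'(t) + (1 - v̄(t))² ≤ 0 for all t ∈ [t₀, t₁], then t₁ - t₀ ≤ v̄(t₀)/(1 - v̄(t₀)). -/
/-- If `v̄` is differentiable on `[t₀,t₁]` with `0 ≤ v̄ < 1` and
`v̄' + (1 - v̄)² ≤ 0` there, then `t₁ - t₀ ≤ v̄(t₀)/(1 - v̄(t₀))`. -/
theorem guaranteed_time_bound (t0 t1 : ℝ) (h01 : t0 ≤ t1) (vbar vbar' : ℝ → ℝ)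
    (hd : ∀ t ∈ Set.Icc t0 t1, HasDerivWithinAt vbar (vbar' t) (Set.Icc t0 t1) t)
    (h0 : ∀ t ∈ Set.Icc t0 t1, 0 ≤ vbar t)
    (h1 : ∀ t ∈ Set.Icc t0 t1, vbar t < 1)
    (hineq : ∀ t ∈ Set.Icc t0 t1, vbar' t + (1 - vbar t) ^ 2 ≤ 0) :
    t1 - t0 ≤ vbar t0 / (1 - vbar t0) := by
  set D := Set.Icc t0 t1 with hD
  have ht0 : t0 ∈ D := Set.left_mem_Icc.2 h01
  have ht1 : t1 ∈ D := Set.right_mem_Icc.2 h01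
  have hpos : ∀ t ∈ D, 0 < 1 - vbar t := fun t ht => by linarith [h1 t ht]
  -- f t = 1/(1 - vbar t) + t
  set f : ℝ → ℝ := fun t => (1 - vbar t)⁻¹ + t with hf
  set f' : ℝ → ℝ := fun t => vbar' t / (1 - vbar t) ^ 2 + 1 with hf'
  have hdf : ∀ t ∈ D, HasDerivWithinAt f (f' t) D t := by
    intro t ht
    have h1v := (hd t ht).const_sub 1
    have := (h1v.inv (ne_of_gt (hpos t ht))).add (hasDerivWithinAt_id t D)
    convert this using 1
    · rfl
    · rfl
    · rfl
    · simp only [hf', neg_neg]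
  have hsub : interior D ⊆ D := interior_subset
  have hanti : AntitoneOn f D := by
    apply antitoneOn_of_hasDerivWithinAt_nonpos (convex_Icc t0 t1)
      (fun t ht => (hdf t ht).continuousWithinAt)
      (fun t ht => ((hdf t (hsub ht)).mono hsub))
    intro t ht
    have ht' := hsub ht
    have hsq : 0 < (1 - vbar t) ^ 2 := pow_pos (hpos t ht') 2
    have := hineq t ht'
    rw [hf']
    simp only
    rw [div_add' _ _ _ (ne_of_gt hsq), div_nonpos_iff]
    right
    constructor <;> linarith
  have key : f t1 ≤ f t0 := hanti ht0 ht1 h01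
  have hg1 : (1:ℝ) ≤ (1 - vbar t1)⁻¹ := by
    rw [le_inv_comm₀ one_pos (hpos t1 ht1)]
    simp [h0 t1 ht1]
  have h0pos := hpos t0 ht0
  have : vbar t0 / (1 - vbar t0) = (1 - vbar t0)⁻¹ - 1 := by
    field_simp
    ring
  rw [this]
  simp only [hf] at key
  linarith
end

section
/- If S ∈ ℝ^{(n+1)×(n+1)} is symmetric and the augmented quadratic form satisfies (v,1)ᵀ S (w,1) ≥ γ vᵀw for suitable pairing over all vertices so that the relaxed matrix inequality X̄ᵀ(S - γ diag(Iₙ,0))X̄ ≥ W holds for a nonnegative-entry symmetric W ≥ 0, then for every x in the simplex conv(v₁,…,v_{n+1}), (x,1)ᵀ S (x,1) ≥ γ ‖x‖². -/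
open Matrix

/-- If the relaxed matrix inequality `X̄ᵀ(S - γ diag(Iₙ,0))X̄ - W ⪰ 0` holds
for a symmetric `W` with nonnegative entries, then the augmented quadratic
form dominates `γ‖x‖²` on the simplex. -/
theorem quadratic_lower_bound_on_simplex (n : ℕ)
    (v : Fin (n + 1) → (Fin n → ℝ)) (hv : AffineIndependent ℝ v)
    (X : Matrix (Fin (n + 1)) (Fin (n + 1)) ℝ)
    (hX : ∀ (i : Fin (n + 1)) (j : Fin (n + 1)),
      X i j = if h : (i : ℕ) < n then v j ⟨i, h⟩ else 1)
    (S : Matrix (Fin (n + 1)) (Fin (n + 1)) ℝ) (hS : S.IsSymm)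
    (γ : ℝ) (hγ : 0 < γ)
    (D : Matrix (Fin (n + 1)) (Fin (n + 1)) ℝ)
    (hD : ∀ i j, D i j = if i = j ∧ (i : ℕ) < n then 1 else 0)
    (W : Matrix (Fin (n + 1)) (Fin (n + 1)) ℝ) (hW : W.IsSymm)
    (hWnn : ∀ i j, 0 ≤ W i j)
    (hPSD : (Xᵀ * (S - γ • D) * X - W).PosSemidef) :
    ∀ x ∈ convexHull ℝ (Set.range v),
      γ * (x ⬝ᵥ x) ≤
        (fun k : Fin (n + 1) => if h : (k : ℕ) < n then x ⟨k, h⟩ else 1) ⬝ᵥ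
          S.mulVec (fun k : Fin (n + 1) => if h : (k : ℕ) < n then x ⟨k, h⟩ else 1) := by
  intro x hx
  rw [convexHull_range_eq_exists_affineCombination] at hx
  obtain ⟨s, w, hw₀, hw₁, hxw⟩ := hx
  -- extend the weights to all of `Fin (n+1)`
  set β : Fin (n + 1) → ℝ := fun i => if i ∈ s then w i else 0 with hβ
  have hβ0 : ∀ i, 0 ≤ β i := by
    intro i; simp only [hβ]
    split
    · exact hw₀ i ‹_›
    · exact le_refl 0
  have hβ1 : ∑ i, β i = 1 := by
    simp only [hβ]
    rw [Finset.sum_ite_mem, Finset.univ_inter, hw₁]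
  have hxv : ∑ i, β i • v i = x := by
    rw [← hxw, Finset.affineCombination_eq_linear_combination s v w hw₁]
    simp only [hβ, ite_smul, zero_smul]
    rw [Finset.sum_ite_mem, Finset.univ_inter]
  set u : Fin (n + 1) → ℝ :=
    fun k : Fin (n + 1) => if h : (k : ℕ) < n then x ⟨k, h⟩ else 1 with hu
  have hXβ : X *ᵥ β = u := by
    funext k
    simp only [mulVec, dotProduct, hu]
    by_cases h : (k : ℕ) < n
    · simp only [h, dif_pos]
      have := congrFun hxv ⟨k, h⟩
      simp only [Finset.sum_apply, Pi.smul_apply, smul_eq_mul] at this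
      rw [← this]
      apply Finset.sum_congr rfl
      intro j _
      rw [hX k j]
      simp [h, mul_comm]
    · simp only [h, dif_neg, not_false_iff]
      calc ∑ j, X k j * β j = ∑ j, β j := by
            apply Finset.sum_congr rfl; intro j _; rw [hX k j]; simp [h]
        _ = 1 := hβ1
  -- the PSD inequality
  have hpsd := hPSD.dotProduct_mulVec_nonneg β
  have hstar : star β = β := rfl
  rw [hstar] at hpsd
  have hWβ : 0 ≤ β ⬝ᵥ W *ᵥ β := by
    simp only [dotProduct, mulVec]
    apply Finset.sum_nonneg
    intro i _
    apply mul_nonneg (hβ0 i)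
    apply Finset.sum_nonneg
    intro j _
    exact mul_nonneg (hWnn i j) (hβ0 j)
  have hsplit : β ⬝ᵥ (Xᵀ * (S - γ • D) * X - W) *ᵥ β
      = u ⬝ᵥ (S - γ • D) *ᵥ u - β ⬝ᵥ W *ᵥ β := by
    rw [sub_mulVec, dotProduct_sub]
    congr 1
    rw [Matrix.mul_assoc, ← mulVec_mulVec, ← mulVec_mulVec, dotProduct_mulVec,
      vecMul_transpose, hXβ]
  have hD' : u ⬝ᵥ D *ᵥ u = x ⬝ᵥ x := by
    have hDu : D *ᵥ u = fun k : Fin (n + 1) => if (k : ℕ) < n then u k else 0 := by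
      funext k
      simp only [mulVec, dotProduct]
      by_cases h : (k : ℕ) < n
      · simp only [h, if_pos]
        rw [Finset.sum_eq_single k]
        · rw [hD k k]; simp [h]
        · intro j _ hj; rw [hD k j]; simp [Ne.symm hj]
        · simp
      · simp only [h, if_neg, not_false_iff]
        apply Finset.sum_eq_zero
        intro j _
        rw [hD k j]
        simp [h]
    rw [hDu]
    simp only [dotProduct]
    rw [Fin.sum_univ_castSucc]
    have hlast : ¬ ((Fin.last n : Fin (n + 1)) : ℕ) < n := by simp
    simp only [hlast, if_neg, not_false_iff, mul_zero, add_zero]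
    apply Finset.sum_congr rfl
    intro i _
    have hi : ((Fin.castSucc i : Fin (n + 1)) : ℕ) < n := i.isLt
    simp [hu, hi]
  have hγD : u ⬝ᵥ (γ • D) *ᵥ u = γ * (x ⬝ᵥ x) := by
    rw [smul_mulVec, dotProduct_smul, smul_eq_mul, hD']
  have key : γ * (x ⬝ᵥ x) + β ⬝ᵥ W *ᵥ β ≤ u ⬝ᵥ S *ᵥ u := by
    have := hpsd
    rw [hsplit, sub_mulVec, dotProduct_sub, hγD] at this
    linarith
  calc γ * (x ⬝ᵥ x) ≤ γ * (x ⬝ᵥ x) + β ⬝ᵥ W *ᵥ β := le_add_of_nonneg_right hWβ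
    _ ≤ u ⬝ᵥ S *ᵥ u := key
end
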